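/- Let g₁, g₂ be independent standard Gaussian random variables and p ≥ 2. Then the function t ↦ P(| |g₁|^p − |g₂|^p | > t) is log-convex on (0, ∞). -/

import Mathlib

open MeasureTheory ProbabilityTheory

open Real Set Filter in
private theorem my_lintegral_polar (g : ℝ × ℝ → ENNReal) :
    (∫⁻ q in polarCoord.target, ENNReal.ofReal q.1 * g (polarCoord.symm q)) = ∫⁻ q, g q := by
  set B : ℝ × ℝ → ℝ × ℝ →L[ℝ] ℝ × ℝ := fun p =>
    LinearMap.toContinuousLinearMap (Matrix.toLin (Module.Basis.finTwoProd ℝ) (Module.Basis.finTwoProd ℝ)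
      !![Real.cos p.2, -p.1 * Real.sin p.2; Real.sin p.2, p.1 * Real.cos p.2])
  have A : ∀ q ∈ polarCoord.target, HasFDerivWithinAt polarCoord.symm (B q) polarCoord.target q :=
    fun q _ => (hasFDerivAt_polarCoord_symm q).hasFDerivWithinAt
  have B_det : ∀ p, (B p).det = p.1 := by
    intro p
    conv_rhs => rw [← one_mul p.1, ← cos_sq_add_sin_sq p.2]
    simp only [B, neg_mul, LinearMap.det_toContinuousLinearMap, LinearMap.det_toLin,
      Matrix.det_fin_two_of, sub_neg_eq_add]
    ring
  have hinj : InjOn polarCoord.symm polarCoord.target := polarCoord.symm.injOn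
  calc
    (∫⁻ q in polarCoord.target, ENNReal.ofReal q.1 * g (polarCoord.symm q))
        = ∫⁻ q in polarCoord.target, ENNReal.ofReal |(B q).det| * g (polarCoord.symm q) := by
          refine setLIntegral_congr_fun polarCoord.open_target.measurableSet
            (fun q hq => ?_)
          rw [B_det, abs_of_pos]
          exact hq.1
    _ = ∫⁻ q in polarCoord.symm '' polarCoord.target, g q := by
          rw [lintegral_image_eq_lintegral_abs_det_fderiv_mul volume
            polarCoord.open_target.measurableSet A hinj]
    _ = ∫⁻ q in polarCoord.source, g q := by rw [polarCoord.symm_image_target_eq_source]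
    _ = ∫⁻ q, g q := by
          rw [setLIntegral_congr polarCoord_source_ae_eq_univ, setLIntegral_univ]

open Real Set in
private theorem my_gauss_prod :
    (gaussianReal 0 1).prod (gaussianReal 0 1) =
      volume.withDensity (fun z : ℝ × ℝ =>
        ENNReal.ofReal ((2 * π)⁻¹ * Real.exp (-(z.1 ^ 2 + z.2 ^ 2) / 2))) := by
  have hd : ∀ z : ℝ × ℝ, gaussianPDF 0 1 z.1 * gaussianPDF 0 1 z.2
      = ENNReal.ofReal ((2 * π)⁻¹ * Real.exp (-(z.1 ^ 2 + z.2 ^ 2) / 2)) := by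
    intro z
    rw [gaussianPDF, gaussianPDF, ← ENNReal.ofReal_mul (gaussianPDFReal_nonneg _ _ _)]
    congr 1
    simp only [gaussianPDFReal, NNReal.coe_one, mul_one, sub_zero]
    have h2π : (0:ℝ) < 2 * π := by positivity
    rw [show (√(2 * π))⁻¹ * rexp (-z.1 ^ 2 / 2) * ((√(2 * π))⁻¹ * rexp (-z.2 ^ 2 / 2))
        = (√(2 * π))⁻¹ * (√(2 * π))⁻¹ * (rexp (-z.1 ^ 2 / 2) * rexp (-z.2 ^ 2 / 2)) by ring]
    rw [← Real.exp_add, ← mul_inv, Real.mul_self_sqrt h2π.le]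
    congr 1
    ring
  refine Measure.prod_eq fun s t hs ht => ?_
  rw [withDensity_apply _ (hs.prod ht)]
  have : ∀ z : ℝ × ℝ, ENNReal.ofReal ((2 * π)⁻¹ * Real.exp (-(z.1 ^ 2 + z.2 ^ 2) / 2))
      = gaussianPDF 0 1 z.1 * gaussianPDF 0 1 z.2 := fun z => (hd z).symm
  rw [setLIntegral_congr_fun (hs.prod ht) (fun z _ => this z)]
  rw [Measure.volume_eq_prod, ← Measure.prod_restrict]
  rw [lintegral_prod_mul (measurable_gaussianPDF 0 1).aemeasurable
    (measurable_gaussianPDF 0 1).aemeasurable]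
  rw [gaussianReal_of_var_ne_zero _ one_ne_zero, withDensity_apply _ hs, withDensity_apply _ ht]

open Real Set Filter in
private theorem my_radial_int {a : ℝ} (ha : 0 ≤ a) :
    ∫⁻ r in Ioi a, ENNReal.ofReal (r * Real.exp (-r ^ 2 / 2))
      = ENNReal.ofReal (Real.exp (-a ^ 2 / 2)) := by
  have hint : IntegrableOn (fun r : ℝ => r * Real.exp (-r ^ 2 / 2)) (Ioi a) := by
    have := integrable_rpow_mul_exp_neg_mul_sq (b := (1:ℝ)/2) (by norm_num) (s := 1) (by norm_num)
    simp only [Real.rpow_one] at this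
    have heq : ∀ x : ℝ, -(1/2 : ℝ) * x ^ 2 = -x ^ 2 / 2 := by intro x; ring
    simp only [heq] at this
    exact this.integrableOn
  have hderiv : ∀ x ∈ Ici a, HasDerivAt (fun r : ℝ => -Real.exp (-r ^ 2 / 2))
      (x * Real.exp (-x ^ 2 / 2)) x := by
    intro x _
    have h1 : HasDerivAt (fun r : ℝ => -r ^ 2 / 2) (-x) x := by
      have := ((hasDerivAt_pow 2 x).neg).div_const 2
      simpa using this.congr_deriv (by push_cast; ring)
    have := (Real.hasDerivAt_exp _).comp x h1
    exact (this.neg).congr_deriv (by ring)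
  have hlim : Tendsto (fun r : ℝ => -Real.exp (-r ^ 2 / 2)) atTop (nhds 0) := by
    rw [show (0:ℝ) = -0 by ring]
    refine Tendsto.neg ?_
    refine Real.tendsto_exp_atBot.comp ?_
    apply Filter.Tendsto.atBot_div_const (by norm_num)
    exact tendsto_neg_atBot_iff.mpr (tendsto_pow_atTop (by norm_num))
  have hb : ∫ r in Ioi a, r * Real.exp (-r ^ 2 / 2) = Real.exp (-a ^ 2 / 2) := by
    rw [integral_Ioi_of_hasDerivAt_of_tendsto' hderiv hint hlim]
    ring
  rw [← hb, ← ofReal_integral_eq_lintegral_ofReal hint]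
  exact (ae_restrict_iff' measurableSet_Ioi).mpr (ae_of_all _ fun x hx =>
    mul_nonneg (le_of_lt (lt_of_le_of_lt ha hx)) (Real.exp_nonneg _))

noncomputable def cmf (p θ : ℝ) : ℝ := |(|Real.cos θ| ^ p - |Real.sin θ| ^ p)|

theorem cmf_nonneg (p θ : ℝ) : 0 ≤ cmf p θ := abs_nonneg _

noncomputable def kf (p t θ : ℝ) : ENNReal :=
  {θ : ℝ | 0 < cmf p θ}.indicator
    (fun θ => ENNReal.ofReal ((2 * Real.pi)⁻¹ *
      Real.exp (-(t ^ (2/p) / cmf p θ ^ (2/p)) / 2))) θ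

open Real Set in
theorem cmf_continuous {p : ℝ} (hp : 0 ≤ p) : Continuous (cmf p) :=
  (((Real.continuous_rpow_const hp).comp continuous_cos.abs).sub
    ((Real.continuous_rpow_const hp).comp continuous_sin.abs)).abs

open Real Set in
theorem kf_measurable {p : ℝ} (hp : 0 ≤ p) (t : ℝ) : Measurable (kf p t) := by
  apply Measurable.indicator
  · apply ENNReal.measurable_ofReal.comp
    apply Measurable.const_mul
    apply Real.measurable_exp.comp
    apply Measurable.div_const
    apply Measurable.neg
    exact (measurable_const.div
      (((Real.continuous_rpow_const (by positivity)).comp (cmf_continuous hp)).measurable))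
  · exact measurableSet_lt measurable_const (cmf_continuous hp).measurable

open Real Set Filter in
theorem my_key {p : ℝ} (hp : 0 < p) {t : ℝ} (ht : 0 < t) :
    ((gaussianReal 0 1).prod (gaussianReal 0 1)) {x : ℝ × ℝ | t < |(|x.1| ^ p - |x.2| ^ p)|}
      = ∫⁻ θ in Ioo (-π) π, kf p t θ := by
  have habs : Continuous fun x : ℝ × ℝ => |(|x.1| ^ p - |x.2| ^ p)| :=
    (((Real.continuous_rpow_const hp.le).comp continuous_fst.abs).sub
      ((Real.continuous_rpow_const hp.le).comp continuous_snd.abs)).abs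
  have hSm : MeasurableSet {x : ℝ × ℝ | t < |(|x.1| ^ p - |x.2| ^ p)|} :=
    measurableSet_lt measurable_const habs.measurable
  set d : ℝ × ℝ → ENNReal := fun z =>
    ENNReal.ofReal ((2 * π)⁻¹ * Real.exp (-(z.1 ^ 2 + z.2 ^ 2) / 2)) with hd
  set S : Set (ℝ × ℝ) := {x : ℝ × ℝ | t < |(|x.1| ^ p - |x.2| ^ p)|} with hS
  set T : Set (ℝ × ℝ) := {z : ℝ × ℝ | t < z.1 ^ p * cmf p z.2} with hT
  set f2 : ℝ × ℝ → ENNReal := fun z =>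
    ENNReal.ofReal (z.1 * ((2 * π)⁻¹ * Real.exp (-z.1 ^ 2 / 2))) with hf2
  have hTm : MeasurableSet T := by
    apply measurableSet_lt measurable_const
    exact ((Real.continuous_rpow_const hp.le).comp continuous_fst).measurable.mul
      ((cmf_continuous hp.le).measurable.comp measurable_snd)
  have hf2m : Measurable f2 := by
    apply ENNReal.measurable_ofReal.comp
    apply measurable_fst.mul
    apply Measurable.const_mul
    exact Real.measurable_exp.comp ((measurable_fst.pow_const 2).neg.div_const 2)
  -- step 1: density form
  rw [my_gauss_prod, withDensity_apply _ hSm, ← lintegral_indicator hSm, ← my_lintegral_polar]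
  -- step 2: rewrite integrand on target
  have hstep : ∀ q ∈ polarCoord.target,
      ENNReal.ofReal q.1 * (S.indicator d) (polarCoord.symm q) = T.indicator f2 q := by
    rintro ⟨r, θ⟩ hq
    have hr : 0 < r := hq.1
    have hsymm : polarCoord.symm (r, θ) = (r * Real.cos θ, r * Real.sin θ) := rfl
    rw [hsymm]
    have hmem : (r * Real.cos θ, r * Real.sin θ) ∈ S ↔ (r, θ) ∈ T := by
      simp only [hS, hT, mem_setOf_eq]
      have h1 : |(|r * Real.cos θ| ^ p - |r * Real.sin θ| ^ p)| = r ^ p * cmf p θ := by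
        rw [abs_mul, abs_mul, abs_of_pos hr,
          Real.mul_rpow hr.le (abs_nonneg _), Real.mul_rpow hr.le (abs_nonneg _),
          ← mul_sub, abs_mul, abs_of_pos (Real.rpow_pos_of_pos hr p)]
        rfl
      rw [h1]
    have hdval : d (r * Real.cos θ, r * Real.sin θ)
        = ENNReal.ofReal ((2 * π)⁻¹ * Real.exp (-r ^ 2 / 2)) := by
      simp only [hd]
      congr 2
      rw [show (r * Real.cos θ) ^ 2 + (r * Real.sin θ) ^ 2
          = r ^ 2 * (Real.sin θ ^ 2 + Real.cos θ ^ 2) by ring, Real.sin_sq_add_cos_sq, mul_one]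
    by_cases hmem2 : (r, θ) ∈ T
    · rw [Set.indicator_of_mem (hmem.mpr hmem2), Set.indicator_of_mem hmem2, hdval, hf2,
        ← ENNReal.ofReal_mul hr.le]
    · rw [Set.indicator_of_notMem (fun h => hmem2 (hmem.mp h)),
        Set.indicator_of_notMem hmem2, mul_zero]
  rw [setLIntegral_congr_fun polarCoord.open_target.measurableSet
    hstep]
  -- step 3: Fubini
  have htgt : polarCoord.target = Ioi (0:ℝ) ×ˢ Ioo (-π) π := rfl
  rw [htgt, Measure.volume_eq_prod, ← Measure.prod_restrict,
    lintegral_prod_symm' _ (hf2m.indicator hTm)]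
  -- step 4: inner integral
  refine lintegral_congr fun θ => ?_
  have hinner : ∀ r : ℝ, T.indicator f2 (r, θ)
      = ({r : ℝ | t < r ^ p * cmf p θ}.indicator
          (fun r => ENNReal.ofReal (r * ((2 * π)⁻¹ * Real.exp (-r ^ 2 / 2)))) r) := by
    intro r
    simp only [Set.indicator_apply, hT, mem_setOf_eq, hf2]
  simp only [hinner]
  by_cases hc : 0 < cmf p θ
  · -- positive case
    set a := (t / cmf p θ) ^ (1/p) with ha
    have htc : 0 < t / cmf p θ := div_pos ht hc
    have hapos : 0 < a := Real.rpow_pos_of_pos htc _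
    have hset : {r : ℝ | t < r ^ p * cmf p θ} ∩ Ioi (0:ℝ) = Ioi a := by
      ext r
      simp only [mem_inter_iff, mem_setOf_eq, mem_Ioi]
      constructor
      · rintro ⟨h1, h2⟩
        have : t / cmf p θ < r ^ p := (div_lt_iff₀ hc).mpr h1
        have := Real.rpow_lt_rpow htc.le this (by positivity : (0:ℝ) < 1/p)
        rwa [← Real.rpow_mul h2.le, mul_one_div, div_self hp.ne', Real.rpow_one, ← ha] at this
      · intro har
        have hrpos : 0 < r := hapos.trans har
        refine ⟨?_, hrpos⟩
        have h2 : a ^ p < r ^ p := Real.rpow_lt_rpow hapos.le har hp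
        rw [ha, ← Real.rpow_mul htc.le, one_div, inv_mul_cancel₀ hp.ne', Real.rpow_one] at h2
        calc t = t / cmf p θ * cmf p θ := by field_simp
        _ < r ^ p * cmf p θ := by exact mul_lt_mul_of_pos_right h2 hc
    have hcondm : MeasurableSet {r : ℝ | t < r ^ p * cmf p θ} :=
      measurableSet_lt measurable_const
        ((Real.continuous_rpow_const hp.le).measurable.mul_const _)
    rw [lintegral_indicator hcondm, Measure.restrict_restrict hcondm, hset]
    have hsq : a ^ 2 = t ^ (2/p) / cmf p θ ^ (2/p) := by
      rw [ha, ← Real.rpow_natCast ((t / cmf p θ) ^ (1/p)) 2, ← Real.rpow_mul htc.le,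
        Real.div_rpow ht.le hc.le]
      norm_num
      rw [show p⁻¹ * 2 = 2 / p by ring]
    calc ∫⁻ r in Ioi a, ENNReal.ofReal (r * ((2 * π)⁻¹ * Real.exp (-r ^ 2 / 2)))
        = ∫⁻ r in Ioi a, ENNReal.ofReal ((2 * π)⁻¹)
            * ENNReal.ofReal (r * Real.exp (-r ^ 2 / 2)) := by
          refine lintegral_congr fun r => ?_
          rw [show r * ((2 * π)⁻¹ * Real.exp (-r ^ 2 / 2))
              = (2 * π)⁻¹ * (r * Real.exp (-r ^ 2 / 2)) by ring,
            ENNReal.ofReal_mul (by positivity)]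
      _ = ENNReal.ofReal ((2 * π)⁻¹) * ENNReal.ofReal (Real.exp (-a ^ 2 / 2)) := by
          rw [lintegral_const_mul' _ _ ENNReal.ofReal_ne_top, my_radial_int hapos.le]
      _ = kf p t θ := by
          rw [kf, Set.indicator_of_mem (by exact hc), ← hsq,
            ENNReal.ofReal_mul (by positivity)]
  · -- zero case
    have hc0 : cmf p θ = 0 := le_antisymm (not_lt.mp hc) (cmf_nonneg p θ)
    have hempty : ∀ r : ℝ, r ∉ {r : ℝ | t < r ^ p * cmf p θ} := by
      intro r hr
      simp only [mem_setOf_eq, hc0, mul_zero] at hr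
      exact absurd hr (not_lt.mpr ht.le)
    rw [kf, Set.indicator_of_notMem (by simpa [hc0] using lt_irrefl (0:ℝ))]
    simp only [Set.indicator_of_notMem (hempty _), lintegral_const, zero_mul]


open Real Set in
theorem my_pos {p : ℝ} (hp : 0 < p) {t : ℝ} (ht : 0 < t) :
    0 < ∫⁻ θ in Ioo (-π) π, kf p t θ := by
  set δ : ℝ := (7/8 : ℝ) ^ p - (1/2 : ℝ) ^ p with hδdef
  have hδ : 0 < δ := by
    have := Real.rpow_lt_rpow (by norm_num : (0:ℝ) ≤ 1/2) (by norm_num : (1/2:ℝ) < 7/8) hp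
    simpa [hδdef, sub_pos] using this
  have hJsub : Ioo (-(1/2) : ℝ) (1/2) ⊆ Ioo (-π) π := by
    have := Real.pi_gt_three
    exact Ioo_subset_Ioo (by linarith) (by linarith)
  have hcm : ∀ θ ∈ Ioo (-(1/2) : ℝ) (1/2), δ ≤ cmf p θ := by
    intro θ hθ
    have habs : |θ| ≤ 1/2 := by
      rw [abs_le]; exact ⟨hθ.1.le, hθ.2.le⟩
    have hsin : |Real.sin θ| ≤ 1/2 := (Real.abs_sin_le_abs).trans habs
    have hcos : (7/8 : ℝ) ≤ Real.cos θ := by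
      have h1 := Real.one_sub_sq_div_two_le_cos (x := θ)
      have h2 : θ ^ 2 ≤ (1/2) ^ 2 := by
        rw [← sq_abs]; exact pow_le_pow_left₀ (abs_nonneg _) habs 2
      nlinarith
    have hcos' : (7/8 : ℝ) ≤ |Real.cos θ| := hcos.trans (le_abs_self _)
    have h1 : (7/8 : ℝ) ^ p ≤ |Real.cos θ| ^ p :=
      Real.rpow_le_rpow (by norm_num) hcos' hp.le
    have h2 : |Real.sin θ| ^ p ≤ (1/2 : ℝ) ^ p :=
      Real.rpow_le_rpow (abs_nonneg _) hsin hp.le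
    calc δ ≤ |Real.cos θ| ^ p - |Real.sin θ| ^ p := by simp only [hδdef]; linarith
    _ ≤ cmf p θ := le_abs_self _
  set ε : ENNReal := ENNReal.ofReal ((2 * π)⁻¹ *
    Real.exp (-(t ^ (2/p) / δ ^ (2/p)) / 2)) with hεdef
  have hkf : ∀ θ ∈ Ioo (-(1/2) : ℝ) (1/2), ε ≤ kf p t θ := by
    intro θ hθ
    have hc : 0 < cmf p θ := lt_of_lt_of_le hδ (hcm θ hθ)
    rw [kf, Set.indicator_of_mem (by exact hc)]
    apply ENNReal.ofReal_le_ofReal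
    apply mul_le_mul_of_nonneg_left _ (by positivity)
    apply Real.exp_le_exp.mpr
    rw [neg_div, neg_div, neg_le_neg_iff]
    have hle : t ^ (2/p) / cmf p θ ^ (2/p) ≤ t ^ (2/p) / δ ^ (2/p) :=
      div_le_div_of_nonneg_left (by positivity) (by positivity)
        (Real.rpow_le_rpow hδ.le (hcm θ hθ) (by positivity))
    linarith
  have hlow : ε * volume (Ioo (-(1/2) : ℝ) (1/2)) ≤ ∫⁻ θ in Ioo (-π) π, kf p t θ := by
    calc ε * volume (Ioo (-(1/2) : ℝ) (1/2))
        = ∫⁻ _ in Ioo (-(1/2) : ℝ) (1/2), ε := (setLIntegral_const _ _).symm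
      _ ≤ ∫⁻ θ in Ioo (-(1/2) : ℝ) (1/2), kf p t θ :=
          setLIntegral_mono (kf_measurable hp.le t) hkf
      _ ≤ ∫⁻ θ in Ioo (-π) π, kf p t θ := lintegral_mono_set hJsub
  refine lt_of_lt_of_le ?_ hlow
  apply ENNReal.mul_pos
  · simp only [hεdef, ne_eq, ENNReal.ofReal_eq_zero, not_le]
    positivity
  · simp [Real.volume_Ioo]

theorem my_holder2 {α : Type*} [MeasurableSpace α] {μ : Measure α} {f g : α → ENNReal}
    (hf : AEMeasurable f μ) (hg : AEMeasurable g μ) {a b : ℝ} (ha : 0 ≤ a) (hb : 0 ≤ b)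
    (hab : a + b = 1) :
    ∫⁻ x, f x ^ a * g x ^ b ∂μ ≤ (∫⁻ x, f x ∂μ) ^ a * (∫⁻ x, g x ∂μ) ^ b := by
  have h := ENNReal.lintegral_prod_norm_pow_le (μ := μ) Finset.univ
    (f := fun i : Bool => if i then f else g)
    (fun i _ => by cases i <;> simpa)
    (p := fun i : Bool => if i then a else b)
    (by simp [Fintype.sum_bool, hab])
    (fun i _ => by cases i <;> simpa)
  simpa [Fintype.prod_bool] using h

open Real Set in
theorem my_pointwise {p : ℝ} (hp : 2 ≤ p) {s t a b : ℝ} (hs : 0 < s) (ht : 0 < t)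
    (ha : 0 < a) (hb : 0 < b) (hab : a + b = 1) (θ : ℝ) :
    kf p (a * s + b * t) θ ≤ kf p s θ ^ a * kf p t θ ^ b := by
  have hp0 : 0 < p := lt_of_lt_of_le two_pos hp
  by_cases hc : 0 < cmf p θ
  · have hmem : θ ∈ {θ | 0 < cmf p θ} := hc
    rw [kf, kf, kf, Set.indicator_of_mem hmem, Set.indicator_of_mem hmem,
      Set.indicator_of_mem hmem]
    have hq0 : 0 < 2/p := by positivity
    have hq1 : 2/p ≤ 1 := by
      rw [div_le_one hp0]; exact hp
    have hC : 0 < cmf p θ ^ (2/p) := Real.rpow_pos_of_pos hc _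
    have hK : 0 < (2 * π)⁻¹ := by positivity
    have hconc : a * s ^ (2/p) + b * t ^ (2/p) ≤ (a * s + b * t) ^ (2/p) := by
      have h := (Real.concaveOn_rpow hq0.le hq1).2 (mem_Ici.mpr hs.le) (mem_Ici.mpr ht.le)
        ha.le hb.le hab
      simpa [smul_eq_mul] using h
    have hreal : (2 * π)⁻¹ * rexp (-((a*s+b*t) ^ (2/p) / cmf p θ ^ (2/p)) / 2)
        ≤ ((2 * π)⁻¹ * rexp (-(s ^ (2/p) / cmf p θ ^ (2/p)) / 2)) ^ a
          * ((2 * π)⁻¹ * rexp (-(t ^ (2/p) / cmf p θ ^ (2/p)) / 2)) ^ b := by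
      rw [Real.mul_rpow hK.le (Real.exp_nonneg _), Real.mul_rpow hK.le (Real.exp_nonneg _),
        show ((2 * π)⁻¹ ^ a * rexp (-(s ^ (2/p) / cmf p θ ^ (2/p)) / 2) ^ a)
            * ((2 * π)⁻¹ ^ b * rexp (-(t ^ (2/p) / cmf p θ ^ (2/p)) / 2) ^ b)
          = ((2 * π)⁻¹ ^ a * (2 * π)⁻¹ ^ b)
            * (rexp (-(s ^ (2/p) / cmf p θ ^ (2/p)) / 2) ^ a
              * rexp (-(t ^ (2/p) / cmf p θ ^ (2/p)) / 2) ^ b) by ring,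
        ← Real.rpow_add hK, hab, Real.rpow_one, ← Real.exp_mul, ← Real.exp_mul, ← Real.exp_add]
      apply mul_le_mul_of_nonneg_left _ hK.le
      apply Real.exp_le_exp.mpr
      have hdiv : (a * s ^ (2/p) + b * t ^ (2/p)) / cmf p θ ^ (2/p)
          ≤ (a*s+b*t) ^ (2/p) / cmf p θ ^ (2/p) := by
        exact div_le_div_of_nonneg_right hconc hC.le
      have hexpand : (a * s ^ (2/p) + b * t ^ (2/p)) / cmf p θ ^ (2/p)
          = a * (s ^ (2/p) / cmf p θ ^ (2/p)) + b * (t ^ (2/p) / cmf p θ ^ (2/p)) := by ring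
      rw [hexpand] at hdiv
      linarith
    calc ENNReal.ofReal ((2 * π)⁻¹ * rexp (-((a*s+b*t) ^ (2/p) / cmf p θ ^ (2/p)) / 2))
        ≤ ENNReal.ofReal (((2 * π)⁻¹ * rexp (-(s ^ (2/p) / cmf p θ ^ (2/p)) / 2)) ^ a
          * ((2 * π)⁻¹ * rexp (-(t ^ (2/p) / cmf p θ ^ (2/p)) / 2)) ^ b) :=
          ENNReal.ofReal_le_ofReal hreal
      _ = _ := by
          rw [ENNReal.ofReal_mul (by positivity), ← ENNReal.ofReal_rpow_of_pos (by positivity),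
            ← ENNReal.ofReal_rpow_of_pos (by positivity)]
  · rw [kf, kf, kf]
    simp only [Set.indicator_apply, Set.mem_setOf_eq, if_neg hc]
    simp [ENNReal.zero_rpow_of_pos ha, ENNReal.zero_rpow_of_pos hb]

noncomputable def Mf (p t : ℝ) : ENNReal :=
  ((gaussianReal 0 1).prod (gaussianReal 0 1)) {x : ℝ × ℝ | t < |(|x.1| ^ p - |x.2| ^ p)|}

open Real Set in
theorem stmt4 (p : ℝ) (hp : 2 ≤ p) :
    ConvexOn ℝ (Set.Ioi (0 : ℝ)) (fun t : ℝ =>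
      Real.log ((((gaussianReal 0 1).prod (gaussianReal 0 1))
        {x : ℝ × ℝ | t < |(|x.1| ^ p - |x.2| ^ p)|}).toReal)) := by
  have hp0 : 0 < p := lt_of_lt_of_le two_pos hp
  show ConvexOn ℝ (Set.Ioi (0:ℝ)) fun t => Real.log ((Mf p t).toReal)
  have hkey : ∀ {u : ℝ}, 0 < u → Mf p u = ∫⁻ θ in Ioo (-π) π, kf p u θ :=
    fun {u} hu => my_key hp0 hu
  have hfin : ∀ u : ℝ, Mf p u ≠ ⊤ := fun u => measure_ne_top _ _
  have hpos : ∀ u : ℝ, 0 < u → 0 < Mf p u := fun u hu => by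
    rw [hkey hu]; exact my_pos hp0 hu
  refine ⟨convex_Ioi 0, fun s hs t ht a b ha hb hab => ?_⟩
  simp only [smul_eq_mul]
  rcases eq_or_lt_of_le ha with rfl | ha0
  · rw [zero_add] at hab; subst hab; simp
  rcases eq_or_lt_of_le hb with rfl | hb0
  · rw [add_zero] at hab; subst hab; simp
  have hs0 : 0 < s := hs
  have ht0 : 0 < t := ht
  have hu0 : 0 < a * s + b * t := add_pos (mul_pos ha0 hs0) (mul_pos hb0 ht0)
  have hMle : Mf p (a * s + b * t) ≤ Mf p s ^ a * Mf p t ^ b := by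
    rw [hkey hu0, hkey hs0, hkey ht0]
    calc ∫⁻ θ in Ioo (-π) π, kf p (a * s + b * t) θ
        ≤ ∫⁻ θ in Ioo (-π) π, kf p s θ ^ a * kf p t θ ^ b :=
          lintegral_mono fun θ => my_pointwise hp hs0 ht0 ha0 hb0 hab θ
      _ ≤ _ := my_holder2 (kf_measurable hp0.le s).aemeasurable
          (kf_measurable hp0.le t).aemeasurable ha hb hab
  have hcal : (Mf p (a * s + b * t)).toReal ≤ (Mf p s).toReal ^ a * (Mf p t).toReal ^ b := by
    have hne : Mf p s ^ a * Mf p t ^ b ≠ ⊤ :=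
      ENNReal.mul_ne_top (ENNReal.rpow_ne_top_of_nonneg ha (hfin s))
        (ENNReal.rpow_ne_top_of_nonneg hb (hfin t))
    have h2 := ENNReal.toReal_mono hne hMle
    rwa [ENNReal.toReal_mul, ← ENNReal.toReal_rpow, ← ENNReal.toReal_rpow] at h2
  have hAs : 0 < (Mf p s).toReal := ENNReal.toReal_pos (hpos s hs0).ne' (hfin s)
  have hAt : 0 < (Mf p t).toReal := ENNReal.toReal_pos (hpos t ht0).ne' (hfin t)
  have hAu : 0 < (Mf p (a * s + b * t)).toReal :=
    ENNReal.toReal_pos (hpos _ hu0).ne' (hfin _)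
  calc Real.log (Mf p (a * s + b * t)).toReal
      ≤ Real.log ((Mf p s).toReal ^ a * (Mf p t).toReal ^ b) := Real.log_le_log hAu hcal
    _ = a * Real.log (Mf p s).toReal + b * Real.log (Mf p t).toReal := by
        rw [Real.log_mul (by positivity) (by positivity), Real.log_rpow hAs, Real.log_rpow hAt]
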